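/- Let I be a finite nonempty index set, ρ_i > 0 for i ∈ I, and θ ≥ 0. For each r > 0 let (G_{i,r})_{i∈I} be independent Poisson random variables with respective means ρ_i r. Then limsup_{r→∞} E[exp(θ Σ_{i∈I} max(ρ_i r - G_{i,r}, 0)/√r)] ≤ Π_{i∈I} (exp(ρ_i θ²/2) + 1). -/

import Mathlib

open Filter

open scoped ENNReal

/-- Quadratic upper bound for `exp (-t)` when `t ≥ 0`. -/
lemma exp_neg_le_quadratic {t : ℝ} (ht : 0 ≤ t) :
    Real.exp (-t) ≤ 1 - t + t ^ 2 / 2 := by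
  set F : ℝ → ℝ := fun y => 1 - y + y ^ 2 / 2 - Real.exp (-y) with hF
  have hd : ∀ x : ℝ, HasDerivAt F (-1 + x + Real.exp (-x)) x := by
    intro x
    have h1 : HasDerivAt (fun y : ℝ => Real.exp (-y)) (-Real.exp (-x)) x := by
      simpa [Function.comp_def] using ((Real.hasDerivAt_exp (-x)).comp x (hasDerivAt_neg x))
    have h2 : HasDerivAt (fun y : ℝ => 1 - y + y ^ 2 / 2) (-1 + x) x := by
      have ha : HasDerivAt (fun y : ℝ => 1 - y) (-1 : ℝ) x := by
        simpa using ((hasDerivAt_id x).const_sub (1 : ℝ))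
      have hb : HasDerivAt (fun y : ℝ => y ^ 2 / 2) x x := by
        have := (hasDerivAt_pow 2 x).div_const 2
        simpa using this
      exact ha.add hb
    have : HasDerivAt F (-1 + x - -Real.exp (-x)) x := h2.sub h1
    convert this using 1
    ring
  have hmono : MonotoneOn F (Set.Ici (0 : ℝ)) := by
    apply monotoneOn_of_deriv_nonneg (convex_Ici 0)
    · exact (Continuous.continuousOn (by continuity))
    · intro x _
      exact (hd x).differentiableAt.differentiableWithinAt
    · intro x hx
      rw [(hd x).deriv]
      have : 1 - x ≤ Real.exp (-x) := by
        have := Real.add_one_le_exp (-x)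
        linarith
      linarith
  have h0 : F 0 ≤ F t := hmono (Set.self_mem_Ici) ht ht
  have hF0 : F 0 = 0 := by simp [hF]
  rw [hF0] at h0
  simp only [hF] at h0
  linarith

/-- The exponential series in the real numbers. -/
lemma real_exp_hasSum (x : ℝ) :
    HasSum (fun n : ℕ => x ^ n / (Nat.factorial n : ℝ)) (Real.exp x) := by
  rw [Real.exp_eq_exp_ℝ]
  exact NormedSpace.expSeries_div_hasSum_exp x

/-- Factorization of a tsum of products over a finite pi type. -/
lemma tsum_pi_prod {I : Type*} [Fintype I] (f : I → ℕ → ℝ≥0∞) :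
    ∑' g : I → ℕ, ∏ i, f i (g i) = ∏ i, ∑' n, f i n := by
  revert f
  refine Fintype.induction_empty_option
    (P := fun α _ => ∀ f : α → ℕ → ℝ≥0∞,
      ∑' g : α → ℕ, ∏ i, f i (g i) = ∏ i, ∑' n, f i n) ?_ ?_ ?_ I
  · intro α β hβ e ih f
    letI : Fintype α := Fintype.ofEquiv β e.symm
    calc ∑' g : β → ℕ, ∏ i, f i (g i)
        = ∑' h : α → ℕ, ∏ i : β, f i ((Equiv.arrowCongr e (Equiv.refl ℕ)) h i) :=
          (Equiv.tsum_eq (Equiv.arrowCongr e (Equiv.refl ℕ)) _).symm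
      _ = ∑' h : α → ℕ, ∏ a : α, f (e a) (h a) := by
          refine tsum_congr fun h => ?_
          rw [← Equiv.prod_comp e (fun b => f b ((Equiv.arrowCongr e (Equiv.refl ℕ)) h b))]
          exact Finset.prod_congr rfl fun a _ => by simp [Equiv.arrowCongr]
      _ = ∏ a : α, ∑' n, f (e a) n := ih (fun a n => f (e a) n)
      _ = ∏ i : β, ∑' n, f i n := Equiv.prod_comp e (fun b => ∑' n, f b n)
  · intro f
    have h1 : ∀ g : PEmpty → ℕ, (∏ i, f i (g i)) = 1 := fun g => by simp
    rw [tsum_congr h1, tsum_eq_single (default : _ → ℕ)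
      (fun b hb => absurd (Subsingleton.elim b default) hb)]
    simp
  · intro α hα ih f
    calc ∑' g : Option α → ℕ, ∏ i, f i (g i)
        = ∑' p : ℕ × (α → ℕ), ∏ i,
            f i ((Equiv.piOptionEquivProd (β := fun _ : Option α => ℕ)).symm p i) :=
          (Equiv.tsum_eq (Equiv.piOptionEquivProd (β := fun _ : Option α => ℕ)).symm _).symm
      _ = ∑' p : ℕ × (α → ℕ), f none p.1 * ∏ a : α, f (some a) (p.2 a) := by
          refine tsum_congr fun p => ?_
          rw [Fintype.prod_option]
          simp [Equiv.piOptionEquivProd]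
      _ = (∑' n, f none n) * ∑' h : α → ℕ, ∏ a, f (some a) (h a) := by
          rw [ENNReal.tsum_prod']
          simp_rw [ENNReal.tsum_mul_left]
          rw [ENNReal.tsum_mul_right]
      _ = (∑' n, f none n) * ∏ a, ∑' n, f (some a) n := by rw [ih]
      _ = ∏ i : Option α, ∑' n, f i n :=
          (Fintype.prod_option (fun i : Option α => ∑' n, f i n)).symm

/-- Single-coordinate bound, valid for every `r ≥ 1`. -/
lemma poisson_factor_bound {c θ r : ℝ} (hc : 0 < c) (hθ : 0 ≤ θ) (hr : 1 ≤ r) :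
    ∑' n : ℕ, ENNReal.ofReal
        (Real.exp (-(c * r)) * (c * r) ^ n / (Nat.factorial n : ℝ) *
          Real.exp (θ * max (c * r - (n : ℝ)) 0 / Real.sqrt r)) ≤
      ENNReal.ofReal (Real.exp (c * θ ^ 2 / 2) + 1) := by
  have hr0 : (0 : ℝ) < r := lt_of_lt_of_le one_pos hr
  set s : ℝ := Real.sqrt r with hs
  have hs0 : 0 < s := Real.sqrt_pos.mpr hr0
  have hs2 : s ^ 2 = r := Real.sq_sqrt hr0.le
  set lam : ℝ := c * r with hlam
  have hlam0 : 0 < lam := mul_pos hc hr0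
  set p : ℕ → ℝ := fun n => Real.exp (-lam) * lam ^ n / (Nat.factorial n : ℝ) with hp
  have hp0 : ∀ n, 0 ≤ p n := fun n =>
    div_nonneg (mul_nonneg (Real.exp_pos _).le (pow_nonneg hlam0.le n)) (Nat.cast_nonneg _)
  -- pointwise bound
  have hpoint : ∀ n : ℕ, p n * Real.exp (θ * max (lam - (n : ℝ)) 0 / s) ≤
      p n * Real.exp (θ * (lam - (n : ℝ)) / s) + p n := by
    intro n
    have hexp : Real.exp (θ * max (lam - (n : ℝ)) 0 / s) ≤
        Real.exp (θ * (lam - (n : ℝ)) / s) + 1 := by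
      rcases le_or_gt 0 (lam - (n : ℝ)) with h | h
      · rw [max_eq_left h]
        linarith [ (Real.exp_pos (θ * (lam - (n : ℝ)) / s)).le ]
      · rw [max_eq_right h.le]
        simp only [mul_zero, zero_div, Real.exp_zero]
        linarith [Real.exp_pos (θ * (lam - (n : ℝ)) / s)]
    calc p n * Real.exp (θ * max (lam - (n : ℝ)) 0 / s)
        ≤ p n * (Real.exp (θ * (lam - (n : ℝ)) / s) + 1) :=
          mul_le_mul_of_nonneg_left hexp (hp0 n)
      _ = p n * Real.exp (θ * (lam - (n : ℝ)) / s) + p n := by ring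
  -- the MGF-type sum
  have hterm : ∀ n : ℕ, p n * Real.exp (θ * (lam - (n : ℝ)) / s) =
      (Real.exp (-lam) * Real.exp (θ * lam / s)) *
        ((lam * Real.exp (-(θ / s))) ^ n / (Nat.factorial n : ℝ)) := by
    intro n
    have h1 : θ * (lam - (n : ℝ)) / s = θ * lam / s + (n : ℝ) * (-(θ / s)) := by
      field_simp
      ring
    simp only [hp]
    rw [h1, Real.exp_add, Real.exp_nat_mul, mul_pow]
    ring
  set μ : ℝ := lam * Real.exp (-(θ / s)) with hμ
  have hμ0 : 0 ≤ μ := mul_nonneg hlam0.le (Real.exp_pos _).le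
  have hsum1 : HasSum (fun n : ℕ => p n * Real.exp (θ * (lam - (n : ℝ)) / s))
      ((Real.exp (-lam) * Real.exp (θ * lam / s)) * Real.exp μ) := by
    have := (real_exp_hasSum μ).mul_left (Real.exp (-lam) * Real.exp (θ * lam / s))
    refine HasSum.congr_fun this fun n => ?_
    rw [hterm n]
  have hsum2 : HasSum p 1 := by
    have := (real_exp_hasSum lam).mul_left (Real.exp (-lam))
    have h2 : Real.exp (-lam) * Real.exp lam = 1 := by
      rw [← Real.exp_add]; simp
    rw [h2] at this
    refine HasSum.congr_fun this fun n => ?_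
    simp only [hp]
    rw [mul_div_assoc]
  -- exponent bound
  have hexpbound : Real.exp (-lam) * Real.exp (θ * lam / s) * Real.exp μ ≤
      Real.exp (c * θ ^ 2 / 2) := by
    rw [← Real.exp_add, ← Real.exp_add]
    apply Real.exp_le_exp.mpr
    have ht0 : 0 ≤ θ / s := div_nonneg hθ hs0.le
    have hq := exp_neg_le_quadratic ht0
    have hkey : Real.exp (-(θ / s)) - 1 + θ / s ≤ (θ / s) ^ 2 / 2 := by linarith
    have hmul := mul_le_mul_of_nonneg_left hkey hlam0.le
    have hts : lam * ((θ / s) ^ 2 / 2) = c * θ ^ 2 / 2 := by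
      rw [hlam, div_pow, hs2]
      field_simp
    calc -lam + θ * lam / s + μ = lam * (Real.exp (-(θ / s)) - 1 + θ / s) := by
          rw [hμ]; field_simp; ring
      _ ≤ lam * ((θ / s) ^ 2 / 2) := hmul
      _ = c * θ ^ 2 / 2 := hts
  -- assemble in ENNReal
  have hsummable1 : Summable (fun n : ℕ => p n * Real.exp (θ * (lam - (n : ℝ)) / s)) :=
    hsum1.summable
  calc ∑' n : ℕ, ENNReal.ofReal (p n * Real.exp (θ * max (lam - (n : ℝ)) 0 / s))
      ≤ ∑' n : ℕ, ENNReal.ofReal (p n * Real.exp (θ * (lam - (n : ℝ)) / s) + p n) :=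
        ENNReal.tsum_le_tsum fun n => ENNReal.ofReal_le_ofReal (hpoint n)
    _ = ∑' n : ℕ, (ENNReal.ofReal (p n * Real.exp (θ * (lam - (n : ℝ)) / s))
          + ENNReal.ofReal (p n)) := by
        refine tsum_congr fun n => ?_
        rw [ENNReal.ofReal_add (mul_nonneg (hp0 n) (Real.exp_pos _).le) (hp0 n)]
    _ = (∑' n : ℕ, ENNReal.ofReal (p n * Real.exp (θ * (lam - (n : ℝ)) / s)))
          + ∑' n : ℕ, ENNReal.ofReal (p n) := ENNReal.tsum_add
    _ ≤ ENNReal.ofReal (Real.exp (c * θ ^ 2 / 2)) + ENNReal.ofReal 1 := by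
        gcongr
        · rw [← ENNReal.ofReal_tsum_of_nonneg
            (fun n => mul_nonneg (hp0 n) (Real.exp_pos _).le) hsummable1,
            hsum1.tsum_eq]
          exact ENNReal.ofReal_le_ofReal hexpbound
        · rw [← ENNReal.ofReal_tsum_of_nonneg hp0 hsum2.summable, hsum2.tsum_eq]
    _ = ENNReal.ofReal (Real.exp (c * θ ^ 2 / 2) + 1) := by
        rw [← ENNReal.ofReal_add (Real.exp_pos _).le zero_le_one]

/-- Let `I` be a finite nonempty index set, `ρ_i > 0`, `θ ≥ 0`. For each `r > 0` let
`(G_{i,r})_{i∈I}` be independent Poisson random variables with means `ρ_i r` (so their joint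
law is the product of the Poisson pmfs). Then
`limsup_{r→∞} E[exp(θ Σ_i max(ρ_i r - G_{i,r}, 0)/√r)] ≤ Π_i (exp(ρ_i θ²/2) + 1)`. -/
theorem indep_poisson_negative_part_exp_moment_limsup {I : Type*} [Fintype I] [Nonempty I]
    (ρ : I → ℝ) (hρ : ∀ i, 0 < ρ i) (θ : ℝ) (hθ : 0 ≤ θ) :
    limsup (fun r : ℝ =>
        ∑' g : I → ℕ, ENNReal.ofReal
          ((∏ i, Real.exp (-(ρ i * r)) * (ρ i * r) ^ (g i) / (Nat.factorial (g i) : ℝ)) *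
            Real.exp (θ * (∑ i, max (ρ i * r - (g i : ℝ)) 0) / Real.sqrt r)))
      atTop ≤ ENNReal.ofReal (∏ i, (Real.exp (ρ i * θ ^ 2 / 2) + 1)) := by
  refine limsup_le_of_le (by isBoundedDefault) ?_
  filter_upwards [eventually_ge_atTop (1 : ℝ)] with r hr
  have hr0 : (0 : ℝ) < r := lt_of_lt_of_le one_pos hr
  set s : ℝ := Real.sqrt r with hs
  -- rewrite the summand as a product over coordinates
  have hsummand : ∀ g : I → ℕ,
      ENNReal.ofReal
        ((∏ i, Real.exp (-(ρ i * r)) * (ρ i * r) ^ (g i) / (Nat.factorial (g i) : ℝ)) *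
          Real.exp (θ * (∑ i, max (ρ i * r - (g i : ℝ)) 0) / s)) =
      ∏ i, ENNReal.ofReal
        (Real.exp (-(ρ i * r)) * (ρ i * r) ^ (g i) / (Nat.factorial (g i) : ℝ) *
          Real.exp (θ * max (ρ i * r - (g i : ℝ)) 0 / s)) := by
    intro g
    have hexp : Real.exp (θ * (∑ i, max (ρ i * r - (g i : ℝ)) 0) / s) =
        ∏ i, Real.exp (θ * max (ρ i * r - (g i : ℝ)) 0 / s) := by
      rw [← Real.exp_sum]
      congr 1
      rw [Finset.mul_sum, Finset.sum_div]
    rw [hexp, ← Finset.prod_mul_distrib]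
    refine ENNReal.ofReal_prod_of_nonneg fun i _ => ?_
    exact mul_nonneg (div_nonneg (mul_nonneg (Real.exp_pos _).le
      (pow_nonneg (mul_pos (hρ i) hr0).le _)) (Nat.cast_nonneg _)) (Real.exp_pos _).le
  calc (∑' g : I → ℕ, ENNReal.ofReal
          ((∏ i, Real.exp (-(ρ i * r)) * (ρ i * r) ^ (g i) / (Nat.factorial (g i) : ℝ)) *
            Real.exp (θ * (∑ i, max (ρ i * r - (g i : ℝ)) 0) / s)))
      = ∑' g : I → ℕ, ∏ i, ENNReal.ofReal
          (Real.exp (-(ρ i * r)) * (ρ i * r) ^ (g i) / (Nat.factorial (g i) : ℝ) *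
            Real.exp (θ * max (ρ i * r - (g i : ℝ)) 0 / s)) := tsum_congr hsummand
    _ = ∏ i, ∑' n : ℕ, ENNReal.ofReal
          (Real.exp (-(ρ i * r)) * (ρ i * r) ^ n / (Nat.factorial n : ℝ) *
            Real.exp (θ * max (ρ i * r - (n : ℝ)) 0 / s)) :=
        tsum_pi_prod (fun i n => ENNReal.ofReal
          (Real.exp (-(ρ i * r)) * (ρ i * r) ^ n / (Nat.factorial n : ℝ) *
            Real.exp (θ * max (ρ i * r - (n : ℝ)) 0 / s)))
    _ ≤ ∏ i, ENNReal.ofReal (Real.exp (ρ i * θ ^ 2 / 2) + 1) :=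
        Finset.prod_le_prod' fun i _ => poisson_factor_bound (hρ i) hθ hr
    _ = ENNReal.ofReal (∏ i, (Real.exp (ρ i * θ ^ 2 / 2) + 1)) :=
        (ENNReal.ofReal_prod_of_nonneg fun i _ => by positivity).symm
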